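/- arXiv:0803.2496 — 6 statements merged into one kernel-verified Lean document; each statement's English description precedes it below -/
import Mathlib

section
/- Let l > 0, 0 < a < l, m > 0 and z be real numbers, and suppose r₊ > 0 satisfies Δ_r(r₊) = 0. Then for every r ≥ r₊ and every θ ∈ [0, π], one has (a · sin θ · √(Δ_r(r))) / ((r² + a²) · √(Δ_θ(θ))) ≤ (a/l) · √((r₊² + l²)/(r₊² + a²)), and moreover (a/l) · √((r₊² + l²)/(r₊² + a²)) < 1. In particular the function α(r,θ) = a sin θ √(Δ_r(r)) / ((r² + a²) √(Δ_θ(θ))) is bounded on (r₊, ∞) × (0, π) by a constant strictly smaller than 1. -/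
open Real

/- Statement 0: the function α(r,θ) = a sin θ √(Δ_r r) / ((r² + a²) √(Δ_θ θ)) is bounded
by (a/l)·√((rp² + l²)/(rp² + a²)), a constant strictly smaller than 1, where rp = r₊ > 0
is a zero of Δ_r. -/
set_option maxHeartbeats 1000000 in
theorem stmt0 (l a m z rp : ℝ) (hl : 0 < l) (ha : 0 < a) (hal : a < l) (hm : 0 < m)
    (hrp : 0 < rp)
    (hΔ : (rp ^ 2 + a ^ 2) * (1 + rp ^ 2 / l ^ 2) - 2 * m * rp + z ^ 2 = 0) :
    (∀ r, rp ≤ r → ∀ θ ∈ Set.Icc (0 : ℝ) π,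
        a * Real.sin θ *
            Real.sqrt ((r ^ 2 + a ^ 2) * (1 + r ^ 2 / l ^ 2) - 2 * m * r + z ^ 2) /
          ((r ^ 2 + a ^ 2) * Real.sqrt (1 - a ^ 2 / l ^ 2 * Real.cos θ ^ 2)) ≤
        a / l * Real.sqrt ((rp ^ 2 + l ^ 2) / (rp ^ 2 + a ^ 2))) ∧
      a / l * Real.sqrt ((rp ^ 2 + l ^ 2) / (rp ^ 2 + a ^ 2)) < 1 := by
  have hl2 : (0:ℝ) < l ^ 2 := by positivity
  have hrpa : (0:ℝ) < rp ^ 2 + a ^ 2 := by positivity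
  have hCnn : (0:ℝ) ≤ (rp ^ 2 + l ^ 2) / (rp ^ 2 + a ^ 2) := by positivity
  have hsqC : Real.sqrt ((rp ^ 2 + l ^ 2) / (rp ^ 2 + a ^ 2)) ^ 2
      = (rp ^ 2 + l ^ 2) / (rp ^ 2 + a ^ 2) := Real.sq_sqrt hCnn
  constructor
  · intro r hr θ hθ
    obtain ⟨hθ0, hθπ⟩ := hθ
    have hsin : 0 ≤ Real.sin θ := Real.sin_nonneg_of_nonneg_of_le_pi hθ0 hθπ
    have hD : (0:ℝ) < r ^ 2 + a ^ 2 := by positivity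
    have hcos2 : Real.cos θ ^ 2 ≤ 1 := Real.cos_sq_le_one θ
    have hpyth : Real.sin θ ^ 2 + Real.cos θ ^ 2 = 1 := Real.sin_sq_add_cos_sq θ
    have hΔθpos : 0 < 1 - a ^ 2 / l ^ 2 * Real.cos θ ^ 2 := by
      have h1 : a ^ 2 / l ^ 2 < 1 := by
        rw [div_lt_one hl2]; nlinarith
      nlinarith [sq_nonneg (Real.cos θ), div_nonneg (sq_nonneg a) hl2.le,
        mul_le_one₀ h1.le (sq_nonneg (Real.cos θ)) hcos2]
    have hsθ : Real.sin θ ≤ Real.sqrt (1 - a ^ 2 / l ^ 2 * Real.cos θ ^ 2) := by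
      rw [show Real.sin θ = Real.sqrt (Real.sin θ ^ 2) by
        rw [Real.sqrt_sq hsin]]
      apply Real.sqrt_le_sqrt
      have : a ^ 2 / l ^ 2 ≤ 1 := by rw [div_le_one hl2]; nlinarith
      nlinarith [sq_nonneg (Real.cos θ)]
    have hsqΔθ : 0 < Real.sqrt (1 - a ^ 2 / l ^ 2 * Real.cos θ ^ 2) :=
      Real.sqrt_pos.mpr hΔθpos
    -- Key polynomial inequality
    have hr2 : rp ^ 2 ≤ r ^ 2 := by nlinarith
    have hkey : (r ^ 2 + a ^ 2) * (1 + r ^ 2 / l ^ 2) - 2 * m * r + z ^ 2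
        ≤ (rp ^ 2 + l ^ 2) / (rp ^ 2 + a ^ 2) * ((r ^ 2 + a ^ 2) / l) ^ 2 := by
      have hΔ' : 2 * m * rp * l ^ 2 = (rp ^ 2 + a ^ 2) * (l ^ 2 + rp ^ 2) + z ^ 2 * l ^ 2 := by
        field_simp at hΔ
        linarith [hΔ]
      have hz : z ^ 2 ≤ 2 * m * r := by
        have h1 : 2 * m * rp ≤ 2 * m * r := by nlinarith
        nlinarith [hΔ', sq_nonneg z, mul_pos hrpa (by positivity : (0:ℝ) < l ^ 2 + rp ^ 2)]
      rw [show (rp ^ 2 + l ^ 2) / (rp ^ 2 + a ^ 2) * ((r ^ 2 + a ^ 2) / l) ^ 2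
          = (rp ^ 2 + l ^ 2) * (r ^ 2 + a ^ 2) ^ 2 / ((rp ^ 2 + a ^ 2) * l ^ 2) by
        field_simp, le_div_iff₀ (by positivity)]
      have h1 : ((r ^ 2 + a ^ 2) * (1 + r ^ 2 / l ^ 2) - 2 * m * r + z ^ 2) *
          ((rp ^ 2 + a ^ 2) * l ^ 2)
          = ((r ^ 2 + a ^ 2) * (l ^ 2 + r ^ 2) - (2 * m * r - z ^ 2) * l ^ 2) *
            (rp ^ 2 + a ^ 2) := by
        field_simp; ring
      rw [h1]
      nlinarith [mul_nonneg (mul_nonneg (by nlinarith : (0:ℝ) ≤ l ^ 2 - a ^ 2) hD.le)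
          (by nlinarith : (0:ℝ) ≤ r ^ 2 - rp ^ 2),
        mul_nonneg (mul_nonneg (by nlinarith : (0:ℝ) ≤ 2 * m * r - z ^ 2) hl2.le) hrpa.le]
    -- sqrt of key inequality
    have hΔrnn : 0 ≤ (rp ^ 2 + l ^ 2) / (rp ^ 2 + a ^ 2) * ((r ^ 2 + a ^ 2) / l) ^ 2 := by
      positivity
    have hsqrtkey : Real.sqrt ((r ^ 2 + a ^ 2) * (1 + r ^ 2 / l ^ 2) - 2 * m * r + z ^ 2)
        ≤ Real.sqrt ((rp ^ 2 + l ^ 2) / (rp ^ 2 + a ^ 2)) * ((r ^ 2 + a ^ 2) / l) := by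
      have := Real.sqrt_le_sqrt hkey
      rwa [Real.sqrt_mul hCnn, Real.sqrt_sq (by positivity : (0:ℝ) ≤ (r ^ 2 + a ^ 2) / l)] at this
    have hΔrsqnn : 0 ≤ Real.sqrt ((r ^ 2 + a ^ 2) * (1 + r ^ 2 / l ^ 2) - 2 * m * r + z ^ 2) :=
      Real.sqrt_nonneg _
    -- combine
    set S := Real.sqrt ((r ^ 2 + a ^ 2) * (1 + r ^ 2 / l ^ 2) - 2 * m * r + z ^ 2) with hS
    set T := Real.sqrt (1 - a ^ 2 / l ^ 2 * Real.cos θ ^ 2) with hT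
    set Q := Real.sqrt ((rp ^ 2 + l ^ 2) / (rp ^ 2 + a ^ 2)) with hQ
    have hden : (0:ℝ) < (r ^ 2 + a ^ 2) * T := by positivity
    rw [div_le_iff₀ hden]
    have h1 : a * Real.sin θ * S ≤ a * T * S :=
      mul_le_mul_of_nonneg_right (mul_le_mul_of_nonneg_left hsθ ha.le) hΔrsqnn
    have h2 : a * T * S ≤ a * T * (Q * ((r ^ 2 + a ^ 2) / l)) := by
      apply mul_le_mul_of_nonneg_left hsqrtkey
      positivity
    calc a * Real.sin θ * S ≤ a * T * (Q * ((r ^ 2 + a ^ 2) / l)) := le_trans h1 h2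
      _ = a / l * Q * ((r ^ 2 + a ^ 2) * T) := by ring
  · have hC : (rp ^ 2 + l ^ 2) / (rp ^ 2 + a ^ 2) < l ^ 2 / a ^ 2 := by
      rw [div_lt_div_iff₀ hrpa (by positivity)]
      nlinarith [mul_pos (by nlinarith : (0:ℝ) < l ^ 2 - a ^ 2) (by positivity : (0:ℝ) < rp ^ 2)]
    have h1 : Real.sqrt ((rp ^ 2 + l ^ 2) / (rp ^ 2 + a ^ 2)) < l / a := by
      rw [show l / a = Real.sqrt ((l / a) ^ 2) from
        (Real.sqrt_sq (by positivity)).symm]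
      apply Real.sqrt_lt_sqrt hCnn
      rw [div_pow]; exact hC
    calc a / l * Real.sqrt ((rp ^ 2 + l ^ 2) / (rp ^ 2 + a ^ 2))
        < a / l * (l / a) := by
          apply mul_lt_mul_of_pos_left h1 (by positivity)
      _ = 1 := by field_simp
end

section
/- Let H be a complex Hilbert space, let Ω be a bounded selfadjoint positive operator on H which is bijective with bounded inverse Ω⁻¹, and let T be a densely defined symmetric operator in H with domain D. Define the operator S with domain Ω(D) := { Ω x : x ∈ D } by S(Ω x) = Ω⁻¹(T x) (i.e. S = Ω⁻¹ ∘ T ∘ Ω⁻¹). Then S is densely defined and symmetric, its adjoint is S* = Ω⁻¹ ∘ T* ∘ Ω⁻¹ with domain Ω(dom T*), and S is essentially selfadjoint if and only if T is essentially selfadjoint. -/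
open scoped InnerProductSpace

/-- The composition `S ∘ B` of a partially defined operator `S` with an everywhere-defined
linear map `B`, with domain `{x | B x ∈ dom S}`. -/
noncomputable def pmapCompLM {𝕜 H₁ H₂ H₃ : Type*} [RCLike 𝕜]
    [NormedAddCommGroup H₁] [InnerProductSpace 𝕜 H₁]
    [NormedAddCommGroup H₂] [InnerProductSpace 𝕜 H₂]
    [NormedAddCommGroup H₃] [InnerProductSpace 𝕜 H₃]
    (S : H₂ →ₗ.[𝕜] H₃) (B : H₁ →ₗ[𝕜] H₂) : H₁ →ₗ.[𝕜] H₃ where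
  domain := S.domain.comap B
  toFun := S.toFun.comp (B.restrict fun _ hx => hx)

/-- The operator `Ω⁻¹ ∘ T ∘ Ω⁻¹` for a continuous linear equivalence `Ω` and a partially
defined operator `T`; its domain is `{x | Ω⁻¹ x ∈ dom T} = Ω (dom T)`. -/
noncomputable def conjOp {H : Type*} [NormedAddCommGroup H] [InnerProductSpace ℂ H]
    (Ω : H ≃L[ℂ] H) (T : H →ₗ.[ℂ] H) : H →ₗ.[ℂ] H :=
  (((Ω.symm : H →L[ℂ] H)) : H →ₗ[ℂ] H).compPMap
    (pmapCompLM T (((Ω.symm : H →L[ℂ] H)) : H →ₗ[ℂ] H))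

set_option linter.unusedSectionVars false
section helpers
variable {H : Type*} [NormedAddCommGroup H] [InnerProductSpace ℂ H]

lemma mem_conjOp_domain {Ω : H ≃L[ℂ] H} {T : H →ₗ.[ℂ] H} {x : H} :
    x ∈ (conjOp Ω T).domain ↔ Ω.symm x ∈ T.domain := Iff.rfl

lemma conjOp_apply (Ω : H ≃L[ℂ] H) (T : H →ₗ.[ℂ] H) (x : (conjOp Ω T).domain) :
    conjOp Ω T x = Ω.symm (T ⟨Ω.symm (x : H), x.2⟩) := rfl

lemma conjOp_domain_eq_map (Ω : H ≃L[ℂ] H) (T : H →ₗ.[ℂ] H) :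
    (conjOp Ω T).domain = T.domain.map ((Ω : H →L[ℂ] H) : H →ₗ[ℂ] H) := by
  ext x
  simp only [mem_conjOp_domain, Submodule.mem_map]
  constructor
  · intro h
    exact ⟨Ω.symm x, h, by simp⟩
  · rintro ⟨y, hy, rfl⟩
    simpa using hy

lemma conjOp_dense {Ω : H ≃L[ℂ] H} {T : H →ₗ.[ℂ] H} (hT : Dense (T.domain : Set H)) :
    Dense ((conjOp Ω T).domain : Set H) := by
  rw [conjOp_domain_eq_map]
  have : ((T.domain.map ((Ω : H →L[ℂ] H) : H →ₗ[ℂ] H) : Submodule ℂ H) : Set H)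
      = (Ω : H → H) '' (T.domain : Set H) := rfl
  rw [this]
  exact Ω.surjective.denseRange.dense_image Ω.continuous hT

-- symmetry of Ω.symm
lemma symm_inner {Ω : H ≃L[ℂ] H} (hsa : ∀ u v : H, ⟪Ω u, v⟫_ℂ = ⟪u, Ω v⟫_ℂ) (u v : H) :
    ⟪Ω.symm u, v⟫_ℂ = ⟪u, Ω.symm v⟫_ℂ := by
  conv_lhs => rw [show v = Ω (Ω.symm v) by simp]
  rw [← hsa (Ω.symm u) (Ω.symm v)]
  simp

lemma conjOp_symm {Ω : H ≃L[ℂ] H} {T : H →ₗ.[ℂ] H}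
    (hsa : ∀ u v : H, ⟪Ω u, v⟫_ℂ = ⟪u, Ω v⟫_ℂ)
    (hsym : ∀ x y : T.domain, ⟪T x, (y : H)⟫_ℂ = ⟪(x : H), T y⟫_ℂ)
    (x y : (conjOp Ω T).domain) :
    ⟪conjOp Ω T x, (y : H)⟫_ℂ = ⟪(x : H), conjOp Ω T y⟫_ℂ := by
  rw [conjOp_apply, conjOp_apply, symm_inner hsa,
    hsym ⟨Ω.symm (x : H), x.2⟩ ⟨Ω.symm (y : H), y.2⟩, ← symm_inner hsa]

variable [CompleteSpace H]

lemma conjOp_adjoint {Ω : H ≃L[ℂ] H} (hsa : ∀ u v : H, ⟪Ω u, v⟫_ℂ = ⟪u, Ω v⟫_ℂ)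
    (T : H →ₗ.[ℂ] H) (hT : Dense (T.domain : Set H)) :
    (conjOp Ω T).adjoint = conjOp Ω T.adjoint := by
  have hS : Dense ((conjOp Ω T).domain : Set H) := conjOp_dense hT
  have key : ∀ (y : H) (hy : y ∈ (conjOp Ω T).adjoint.domain) (v : T.domain),
      ⟪Ω ((conjOp Ω T).adjoint ⟨y, hy⟩), (v : H)⟫_ℂ = ⟪Ω.symm y, T v⟫_ℂ := by
    intro y hy v
    have hv : (Ω (v : H)) ∈ (conjOp Ω T).domain := by
      rw [mem_conjOp_domain]; simpa using v.2
    rw [hsa, LinearPMap.adjoint_isFormalAdjoint hS ⟨y, hy⟩ ⟨Ω (v : H), hv⟩]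
    have hcoe : (⟨Ω.symm ((⟨Ω (v : H), hv⟩ : (conjOp Ω T).domain) : H), hv⟩ : T.domain) = v :=
      Subtype.ext (by simp)
    rw [conjOp_apply, hcoe, ← symm_inner hsa]
  refine le_antisymm ?_ ?_
  · -- S† ≤ conj T†
    refine ⟨fun y hy => ?_, fun x y hxy => ?_⟩
    · rw [mem_conjOp_domain]
      exact LinearPMap.mem_adjoint_domain_of_exists _
        ⟨Ω ((conjOp Ω T).adjoint ⟨y, hy⟩), key y hy⟩
    · rcases x with ⟨x, hx⟩
      rcases y with ⟨y, hy⟩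
      dsimp only at hxy
      subst hxy
      have h2 : T.adjoint ⟨Ω.symm x, hy⟩ = Ω ((conjOp Ω T).adjoint ⟨x, hx⟩) :=
        LinearPMap.adjoint_apply_eq hT _ fun v => key x hx v
      rw [conjOp_apply Ω T.adjoint ⟨x, hy⟩]
      rw [show (⟨Ω.symm x, hy⟩ : T.adjoint.domain) = ⟨Ω.symm x, hy⟩ from rfl, h2]
      simp
  · -- conj T† is a formal adjoint of S
    refine LinearPMap.IsFormalAdjoint.le_adjoint hS ?_
    intro x y
    rw [conjOp_apply Ω T x, conjOp_apply Ω T.adjoint y, symm_inner hsa,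
      (LinearPMap.adjoint_isFormalAdjoint hT).symm ⟨Ω.symm (x : H), x.2⟩ ⟨Ω.symm (y : H), y.2⟩,
      ← symm_inner hsa]

lemma conjOp_conjOp (Ω : H ≃L[ℂ] H) (P : H →ₗ.[ℂ] H) : conjOp Ω.symm (conjOp Ω P) = P := by
  have hdom : (conjOp Ω.symm (conjOp Ω P)).domain = P.domain := by
    ext x
    rw [mem_conjOp_domain, mem_conjOp_domain]
    simp
  refine LinearPMap.ext hdom ?_
  intro x hx hy
  rw [conjOp_apply, conjOp_apply]
  refine Eq.trans ?_ (by simp : Ω.symm.symm (Ω.symm (P ⟨x, hy⟩)) = P ⟨x, hy⟩)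
  exact congrArg (fun z => Ω.symm.symm (Ω.symm z)) (congrArg P (Subtype.ext (by simp)))


end helpers


/- Statement 4: let `Ω` be a bounded selfadjoint positive operator, bijective with bounded
inverse, and let `T` be densely defined and symmetric with domain `D`. Then
`S = Ω⁻¹ ∘ T ∘ Ω⁻¹` with domain `Ω(D)` is densely defined and symmetric, its adjoint is
`S* = Ω⁻¹ ∘ T* ∘ Ω⁻¹` with domain `Ω(dom T*)`, and `S` is essentially selfadjoint
(i.e. `S** = S*`) iff `T` is essentially selfadjoint (i.e. `T** = T*`). -/
theorem stmt4 {H : Type*} [NormedAddCommGroup H] [InnerProductSpace ℂ H] [CompleteSpace H]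
    (Ω : H ≃L[ℂ] H) (hΩ : ((Ω : H →L[ℂ] H)).IsPositive)
    (T : H →ₗ.[ℂ] H) (hT : Dense (T.domain : Set H))
    (hsym : ∀ x y : T.domain, ⟪T x, (y : H)⟫_ℂ = ⟪(x : H), T y⟫_ℂ) :
    (conjOp Ω T).domain = T.domain.map ((Ω : H →L[ℂ] H) : H →ₗ[ℂ] H) ∧
      Dense ((conjOp Ω T).domain : Set H) ∧
      (∀ x y : (conjOp Ω T).domain,
        ⟪conjOp Ω T x, (y : H)⟫_ℂ = ⟪(x : H), conjOp Ω T y⟫_ℂ) ∧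
      (conjOp Ω T).adjoint = conjOp Ω T.adjoint ∧
      ((conjOp Ω T).adjoint.adjoint = (conjOp Ω T).adjoint ↔
        T.adjoint.adjoint = T.adjoint) := by
  have hsa : ∀ u v : H, ⟪Ω u, v⟫_ℂ = ⟪u, Ω v⟫_ℂ := by
    intro u v
    show ⟪(Ω : H →L[ℂ] H) u, v⟫_ℂ = ⟪u, (Ω : H →L[ℂ] H) v⟫_ℂ
    conv_rhs => rw [← ContinuousLinearMap.adjoint_inner_left]
    rw [hΩ.isSelfAdjoint.adjoint_eq]
  have e1 : (conjOp Ω T).adjoint = conjOp Ω T.adjoint := conjOp_adjoint hsa T hT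
  have hTle : T ≤ T.adjoint := LinearPMap.IsFormalAdjoint.le_adjoint hT hsym
  have hT' : Dense (T.adjoint.domain : Set H) := hT.mono hTle.1
  have e2 : (conjOp Ω T).adjoint.adjoint = conjOp Ω T.adjoint.adjoint := by
    rw [e1, conjOp_adjoint hsa T.adjoint hT']
  refine ⟨conjOp_domain_eq_map Ω T, conjOp_dense hT, conjOp_symm hsa hsym, e1, ?_⟩
  rw [e2, e1]
  constructor
  · intro h
    have := congrArg (conjOp Ω.symm) h
    rwa [conjOp_conjOp, conjOp_conjOp] at this
  · intro h
    rw [h]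
end

section
/- Let x₀ < b be real numbers, let f : ℝ → ℝ be continuous on [x₀, b) and have a derivative f′(x) at every x ∈ [x₀, b), and let c ∈ ℝ. Assume f(x₀) ≤ c and that for every x ∈ [x₀, b) with f(x) = c one has f′(x) < 0. Then f(x) ≤ c for all x ∈ [x₀, b). -/
/- Statement 9 (barrier lemma): if `f` is continuous on `[x₀, b)`, has derivative `f' x`
at every point of `[x₀, b)`, starts with `f x₀ ≤ c`, and `f' x < 0` whenever `f x = c`
on `[x₀, b)`, then `f x ≤ c` on all of `[x₀, b)`. -/
theorem stmt9 (x₀ b c : ℝ) (hx₀b : x₀ < b) (f f' : ℝ → ℝ)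
    (hcont : ContinuousOn f (Set.Ico x₀ b))
    (hderiv : ∀ x ∈ Set.Ico x₀ b, HasDerivAt f (f' x) x)
    (hstart : f x₀ ≤ c)
    (hbar : ∀ x ∈ Set.Ico x₀ b, f x = c → f' x < 0) :
    ∀ x ∈ Set.Ico x₀ b, f x ≤ c := by
  intro x hx
  obtain ⟨hx₀x, hxb⟩ := hx
  by_contra h
  push_neg at h
  have hx₀ : x₀ < x := lt_of_le_of_ne hx₀x (by rintro rfl; linarith)
  have hIcc : Set.Icc x₀ x ⊆ Set.Ico x₀ b :=
    fun t ht => ⟨ht.1, lt_of_le_of_lt ht.2 hxb⟩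
  set S : Set ℝ := Set.Icc x₀ x ∩ f ⁻¹' Set.Iic c with hS
  have hx₀S : x₀ ∈ S := ⟨⟨le_refl _, hx₀.le⟩, hstart⟩
  have hSne : S.Nonempty := ⟨x₀, hx₀S⟩
  have hSbdd : BddAbove S := ⟨x, fun t ht => ht.1.2⟩
  have hscont : ContinuousOn f (Set.Icc x₀ x) := hcont.mono hIcc
  have hSclosed : IsClosed S :=
    hscont.preimage_isClosed_of_isClosed isClosed_Icc isClosed_Iic
  set s := sSup S with hs
  have hsS : s ∈ S := hSclosed.csSup_mem hSne hSbdd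
  have hsmem : s ∈ Set.Icc x₀ x := hsS.1
  have hfs_le : f s ≤ c := hsS.2
  have hsx : s < x :=
    hsmem.2.lt_of_ne (fun he => absurd (he ▸ hfs_le) (not_le.mpr h))
  have hgt : ∀ t ∈ Set.Ioc s x, c < f t := by
    intro t ht
    by_contra hle
    push_neg at hle
    have htS : t ∈ S := ⟨⟨hsmem.1.trans ht.1.le, ht.2⟩, hle⟩
    exact absurd (le_csSup hSbdd htS) (not_le.mpr ht.1)
  have hfs : f s = c := by
    rcases eq_or_lt_of_le hfs_le with h' | h'
    · exact h'
    · exfalso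
      have hsub : Set.Icc s x ⊆ Set.Icc x₀ x := Set.Icc_subset_Icc hsmem.1 le_rfl
      have := intermediate_value_Icc hsx.le (hscont.mono hsub)
      obtain ⟨t, htmem, htc⟩ := this ⟨h'.le, h.le⟩
      have hts : s < t := lt_of_le_of_ne htmem.1 (by rintro rfl; linarith)
      exact absurd htc (ne_of_gt (hgt t ⟨hts, htmem.2⟩))
  have hsIco : s ∈ Set.Ico x₀ b := hIcc hsmem
  have hneg : f' s < 0 := hbar s hsIco hfs
  have hslope : Filter.Tendsto (slope f s) (nhdsWithin s {s}ᶜ) (nhds (f' s)) :=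
    hasDerivAt_iff_tendsto_slope.mp (hderiv s hsIco)
  have h1 : slope f s ⁻¹' Set.Iio 0 ∈ nhdsWithin s {s}ᶜ :=
    hslope (Iio_mem_nhds hneg)
  have h2 : slope f s ⁻¹' Set.Iio 0 ∈ nhdsWithin s (Set.Ioi s) :=
    nhdsWithin_mono s (fun t ht => ne_of_gt ht) h1
  have h3 : Set.Ioc s x ∈ nhdsWithin s (Set.Ioi s) :=
    Ioc_mem_nhdsGT_of_mem ⟨le_refl s, hsx⟩
  obtain ⟨t, ht1, ht2⟩ := Filter.nonempty_of_mem (Filter.inter_mem h2 h3)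
  have hslope_pos : 0 < slope f s t := by
    rw [slope_def_field]
    apply div_pos
    · linarith [hgt t ht2, hfs]
    · linarith [ht2.1]
  exact absurd ht1 (not_lt.mpr hslope_pos.le)
end

section
/- Let x₀ < b be real numbers and let f : ℝ → ℝ have a derivative f′(x) at every x ∈ [x₀, b). Assume that for every x ∈ [x₀, b): if f(x)/π ∈ ℤ then f′(x) < 0, and if f(x)/π − 1/2 ∈ ℤ then f′(x) > 0. Then f is bounded on [x₀, b): there exists M such that |f(x)| ≤ M for all x ∈ [x₀, b). -/
open Real

/-- Barrier lemma: if `g x₀ ≤ c` and `g' x < 0` whenever `g x = c`, then `g ≤ c` on `[x₀, b)`. -/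
lemma barrier_le {x₀ b : ℝ} {g g' : ℝ → ℝ}
    (hderiv : ∀ x ∈ Set.Ico x₀ b, HasDerivAt g (g' x) x)
    {c : ℝ} (h0 : g x₀ ≤ c) (hc : ∀ x ∈ Set.Ico x₀ b, g x = c → g' x < 0) :
    ∀ x ∈ Set.Ico x₀ b, g x ≤ c := by
  intro x₁ hx₁
  by_contra h
  push_neg at h
  obtain ⟨hx₀x₁, hx₁b⟩ := hx₁
  have hsub : Set.Icc x₀ x₁ ⊆ Set.Ico x₀ b := fun y hy => ⟨hy.1, lt_of_le_of_lt hy.2 hx₁b⟩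
  set S : Set ℝ := {x | x ∈ Set.Icc x₀ x₁ ∧ g x ≤ c} with hS
  have hne : S.Nonempty := ⟨x₀, ⟨le_refl _, hx₀x₁⟩, h0⟩
  have hbdd : BddAbove S := ⟨x₁, fun y hy => hy.1.2⟩
  set s := sSup S with hs
  have hsx₁ : s ≤ x₁ := csSup_le hne (fun y hy => hy.1.2)
  have hx₀s : x₀ ≤ s := le_csSup hbdd ⟨⟨le_refl _, hx₀x₁⟩, h0⟩
  have hsIco : s ∈ Set.Ico x₀ b := ⟨hx₀s, lt_of_le_of_lt hsx₁ hx₁b⟩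
  have hcont : ContinuousAt g s := (hderiv s hsIco).continuousAt
  -- g s ≤ c
  obtain ⟨u, hmono, hlim, hmem⟩ := exists_seq_tendsto_sSup hne hbdd
  have hgs : g s ≤ c := by
    have : Filter.Tendsto (g ∘ u) Filter.atTop (nhds (g s)) := hcont.tendsto.comp hlim
    exact le_of_tendsto this (Filter.Eventually.of_forall fun n => (hmem n).2)
  have hslt : s < x₁ := by
    rcases lt_or_eq_of_le hsx₁ with h' | h'
    · exact h'
    · exfalso; rw [h'] at hgs; exact absurd hgs (not_le.mpr h)
  -- In both cases, find y > s, y ≤ x₁, with g y ≤ c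
  have key : ∀ᶠ y in nhdsWithin s (Set.Ioi s), g y < c := by
    rcases lt_or_eq_of_le hgs with hlt | heq
    · have : ∀ᶠ y in nhds s, g y < c := hcont.tendsto.eventually_lt_const hlt
      exact this.filter_mono nhdsWithin_le_nhds
    · have hd := hderiv s hsIco
      have hd' : g' s < 0 := hc s hsIco heq
      have hslope : Filter.Tendsto (slope g s) (nhdsWithin s {s}ᶜ) (nhds (g' s)) :=
        hasDerivAt_iff_tendsto_slope.mp hd
      have hslope' : Filter.Tendsto (slope g s) (nhdsWithin s (Set.Ioi s)) (nhds (g' s)) :=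
        hslope.mono_left (nhdsWithin_mono s (fun y hy => ne_of_gt hy))
      have hneg : ∀ᶠ y in nhdsWithin s (Set.Ioi s), slope g s y < 0 :=
        hslope'.eventually_lt_const hd'
      filter_upwards [hneg, self_mem_nhdsWithin] with y hy hys
      have hys' : (0 : ℝ) < y - s := sub_pos.mpr hys
      have : g y - g s < 0 := by
        have := mul_lt_mul_of_pos_right hy hys'
        rwa [slope_def_field, div_mul_cancel₀ _ (ne_of_gt hys'), zero_mul] at this
      linarith
  have hIoc : Set.Ioc s x₁ ∈ nhdsWithin s (Set.Ioi s) :=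
    Ioc_mem_nhdsGT_of_mem ⟨le_refl s, hslt⟩
  obtain ⟨y, hy1, hy2⟩ := (key.and (Filter.eventually_of_mem hIoc (fun y hy => hy))).exists
  have : y ∈ S := ⟨⟨le_trans hx₀s (le_of_lt hy2.1), hy2.2⟩, le_of_lt hy1⟩
  exact absurd (le_csSup hbdd this) (not_le.mpr hy2.1)

theorem stmt10 (x₀ b : ℝ) (hx₀b : x₀ < b) (f f' : ℝ → ℝ)
    (hderiv : ∀ x ∈ Set.Ico x₀ b, HasDerivAt f (f' x) x)
    (hdown : ∀ x ∈ Set.Ico x₀ b, (∃ p : ℤ, f x / π = p) → f' x < 0)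
    (hup : ∀ x ∈ Set.Ico x₀ b, (∃ p : ℤ, f x / π - 1 / 2 = p) → 0 < f' x) :
    ∃ M : ℝ, ∀ x ∈ Set.Ico x₀ b, |f x| ≤ M := by
  have hπ : (0:ℝ) < π := Real.pi_pos
  set U : ℝ := π * ⌈f x₀ / π⌉ with hU
  set L : ℝ := π * (⌊f x₀ / π - 1/2⌋ + 1/2) with hL
  have hupper : ∀ x ∈ Set.Ico x₀ b, f x ≤ U := by
    refine barrier_le hderiv ?_ ?_
    · have h1 : f x₀ / π ≤ (⌈f x₀ / π⌉ : ℝ) := Int.le_ceil _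
      rw [hU]
      calc f x₀ = π * (f x₀ / π) := by field_simp
        _ ≤ π * ⌈f x₀ / π⌉ := by nlinarith
    · intro x hx hfx
      refine hdown x hx ⟨⌈f x₀ / π⌉, ?_⟩
      rw [hfx, hU]; field_simp
  have hlower : ∀ x ∈ Set.Ico x₀ b, -L ≤ -f x → True := fun _ _ _ => trivial
  have hlower' : ∀ x ∈ Set.Ico x₀ b, (-f) x ≤ -L := by
    refine barrier_le (g' := fun x => -f' x) (fun x hx => (hderiv x hx).neg) ?_ ?_
    · have h1 : (⌊f x₀ / π - 1/2⌋ : ℝ) ≤ f x₀ / π - 1/2 := Int.floor_le _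
      have : L ≤ f x₀ := by
        rw [hL]
        have h2 : (⌊f x₀ / π - 1/2⌋ : ℝ) + 1/2 ≤ f x₀ / π := by linarith
        calc π * (⌊f x₀ / π - 1/2⌋ + 1/2) ≤ π * (f x₀ / π) := by nlinarith
          _ = f x₀ := by field_simp
      simpa using this
    · intro x hx hfx
      have hfxL : f x = L := by simpa [neg_eq_iff_eq_neg] using hfx
      have : 0 < f' x := by
        refine hup x hx ⟨⌊f x₀ / π - 1/2⌋, ?_⟩
        rw [hfxL, hL]; field_simp; ring
      simpa using this
  refine ⟨max |U| |L|, fun x hx => ?_⟩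
  have h1 := hupper x hx
  have h2 := hlower' x hx
  simp only [Pi.neg_apply, neg_le_neg_iff] at h2
  rw [abs_le]
  constructor
  · have : -|L| ≤ L := neg_abs_le L
    have h2' : L ≤ f x := by linarith [h2]
    have := le_max_right |U| |L|
    linarith
  · have : U ≤ |U| := le_abs_self U
    have := le_max_left |U| |L|
    linarith [hupper x hx]
end

section
/- Fix real parameters l > 0, 0 ≤ a < l, m, z, and set Δ_r(r) = (r² + a²)(1 + r²/l²) − 2 m r + z² and Ξ = 1 − a²/l². Suppose r₊ > 0 satisfies Δ_r(r₊) = 0, the derivative Δ_r′(r₊) > 0 (non-extremal case), and Δ_r(r) > 0 for all r ∈ (r₊, r₀], where r₀ > r₊. Let k, e, q_e, μ, λ be real numbers and set φ₊ = (a Ξ k + e q_e r₊)/(r₊² + a²). Then the function r ↦ ((r² + a²)/Δ_r(r)) · |(a Ξ k + e q_e r)/(r² + a²) − φ₊| + (μ |r| + |λ|)/√(Δ_r(r)) is Lebesgue-integrable on the interval (r₊, r₀). -/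
open MeasureTheory

/- Statement 14: near a non-extremal horizon, the radial potential differs from the
constant `φ₊` by an L¹ perturbation in the tortoise coordinate: the function
`((r²+a²)/Δ_r)·|(aΞk + e q_e r)/(r²+a²) − φ₊| + (μ|r| + |λ|)/√Δ_r`
is Lebesgue-integrable on `(rp, r₀)`. -/
theorem stmt14 (l a m z rp r₀ k e qe μ lam : ℝ) (hl : 0 < l) (ha : 0 ≤ a) (hal : a < l)
    (hrp : 0 < rp) (hr₀ : rp < r₀)
    (hΔzero : (rp ^ 2 + a ^ 2) * (1 + rp ^ 2 / l ^ 2) - 2 * m * rp + z ^ 2 = 0)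
    (hΔ' : 0 < deriv
      (fun r : ℝ => (r ^ 2 + a ^ 2) * (1 + r ^ 2 / l ^ 2) - 2 * m * r + z ^ 2) rp)
    (hΔpos : ∀ r ∈ Set.Ioc rp r₀,
      0 < (r ^ 2 + a ^ 2) * (1 + r ^ 2 / l ^ 2) - 2 * m * r + z ^ 2) :
    IntegrableOn
      (fun r : ℝ =>
        (r ^ 2 + a ^ 2) /
            ((r ^ 2 + a ^ 2) * (1 + r ^ 2 / l ^ 2) - 2 * m * r + z ^ 2) *
            |(a * (1 - a ^ 2 / l ^ 2) * k + e * qe * r) / (r ^ 2 + a ^ 2) -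
              (a * (1 - a ^ 2 / l ^ 2) * k + e * qe * rp) / (rp ^ 2 + a ^ 2)| +
          (μ * |r| + |lam|) /
            Real.sqrt ((r ^ 2 + a ^ 2) * (1 + r ^ 2 / l ^ 2) - 2 * m * r + z ^ 2))
      (Set.Ioo rp r₀) volume := by
  have hl2 : (0:ℝ) < l ^ 2 := by positivity
  set g : ℝ → ℝ := fun r =>
    (r + rp) * (1 + a ^ 2 / l ^ 2) + (r + rp) * (r ^ 2 + rp ^ 2) / l ^ 2 - 2 * m with hgdef
  have hfac : ∀ r : ℝ,
      (r ^ 2 + a ^ 2) * (1 + r ^ 2 / l ^ 2) - 2 * m * r + z ^ 2 = (r - rp) * g r := by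
    intro r
    simp only [hgdef]
    linear_combination hΔzero
  -- derivative at rp
  have hder : HasDerivAt
      (fun r : ℝ => (r ^ 2 + a ^ 2) * (1 + r ^ 2 / l ^ 2) - 2 * m * r + z ^ 2)
      (2 * rp * (1 + rp ^ 2 / l ^ 2) + (rp ^ 2 + a ^ 2) * (2 * rp / l ^ 2) - 2 * m) rp := by
    have h1 : HasDerivAt (fun r : ℝ => r ^ 2 + a ^ 2) (2 * rp) rp := by
      simpa using (hasDerivAt_pow 2 rp).add_const (a ^ 2)
    have h2 : HasDerivAt (fun r : ℝ => 1 + r ^ 2 / l ^ 2) (2 * rp / l ^ 2) rp := by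
      simpa using ((hasDerivAt_pow 2 rp).div_const (l ^ 2)).const_add 1
    have h3 : HasDerivAt (fun r : ℝ => 2 * m * r) (2 * m) rp := by
      simpa using (hasDerivAt_id rp).const_mul (2 * m)
    exact ((h1.mul h2).sub h3).add_const (z ^ 2)
  have hgrp : 0 < g rp := by
    rw [hder.deriv] at hΔ'
    have : g rp = 2 * rp * (1 + rp ^ 2 / l ^ 2) + (rp ^ 2 + a ^ 2) * (2 * rp / l ^ 2) - 2 * m := by
      simp only [hgdef]; field_simp; ring
    rw [this]; exact hΔ'
  have hgpos : ∀ r ∈ Set.Icc rp r₀, 0 < g r := by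
    intro r hr
    rcases eq_or_lt_of_le hr.1 with h | h
    · rwa [← h]
    · have hΔr := hΔpos r ⟨h, hr.2⟩
      rw [hfac r] at hΔr
      have ht : 0 < r - rp := sub_pos.2 h
      nlinarith
  have hgc : ContinuousOn g (Set.Icc rp r₀) := by
    apply Continuous.continuousOn; simp only [hgdef]; fun_prop
  have hne : (Set.Icc rp r₀).Nonempty := ⟨rp, Set.left_mem_Icc.2 hr₀.le⟩
  obtain ⟨c, hc, hcmin⟩ := isCompact_Icc.exists_isMinOn hne hgc
  set mg : ℝ := g c with hmgdef
  have hmg : 0 < mg := hgpos c hc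
  -- the numerator polynomial h
  set hh : ℝ → ℝ := fun r =>
    e * qe * a ^ 2 - a * (1 - a ^ 2 / l ^ 2) * k * (r + rp) - e * qe * (r * rp) with hhdef
  have hhc : ContinuousOn (fun r => |hh r|) (Set.Icc rp r₀) := by
    apply Continuous.continuousOn; simp only [hhdef]; fun_prop
  obtain ⟨d, hd, hdmax⟩ := isCompact_Icc.exists_isMaxOn hne hhc
  set Mh : ℝ := |hh d| with hMhdef
  have hMh0 : 0 ≤ Mh := abs_nonneg _
  have hDrp : (0:ℝ) < rp ^ 2 + a ^ 2 := by positivity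
  set C₁ : ℝ := Mh / (mg * (rp ^ 2 + a ^ 2)) with hC₁def
  set C₂ : ℝ := (|μ| * r₀ + |lam|) / Real.sqrt mg with hC₂def
  have hC₂0 : 0 ≤ C₂ := by
    apply div_nonneg _ (Real.sqrt_nonneg _)
    have : (0:ℝ) < r₀ := hrp.trans hr₀
    positivity
  -- dominating function
  set G : ℝ → ℝ := fun r => C₁ + C₂ * (r - rp) ^ (-(1/2) : ℝ) with hGdef
  have hGint : IntegrableOn G (Set.Ioo rp r₀) volume := by
    apply Integrable.add
    · exact (integrableOn_const measure_Ioo_lt_top.ne)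
    · apply Integrable.const_mul
      have h1 : IntervalIntegrable (fun x : ℝ => x ^ (-(1/2) : ℝ)) volume 0 (r₀ - rp) :=
        intervalIntegral.intervalIntegrable_rpow' (by norm_num)
      have h2 := h1.comp_sub_right rp
      simp only [zero_add, sub_add_cancel] at h2
      have h3 := (intervalIntegrable_iff_integrableOn_Ioc_of_le hr₀.le).1 h2
      exact h3.mono_set Set.Ioo_subset_Ioc_self
  apply Integrable.mono hGint
  · -- measurability
    apply ContinuousOn.aestronglyMeasurable _ measurableSet_Ioo
    have hΔne : ∀ r ∈ Set.Ioo rp r₀,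
        (r ^ 2 + a ^ 2) * (1 + r ^ 2 / l ^ 2) - 2 * m * r + z ^ 2 ≠ 0 :=
      fun r hr => (hΔpos r ⟨hr.1, hr.2.le⟩).ne'
    have hDne : ∀ r ∈ Set.Ioo rp r₀, (r ^ 2 + a ^ 2) ≠ 0 := by
      intro r hr
      have h0 : 0 < r := hrp.trans hr.1
      positivity
    apply ContinuousOn.add
    · apply ContinuousOn.mul
      · exact ContinuousOn.div (by fun_prop) (by fun_prop) hΔne
      · apply ContinuousOn.abs
        apply ContinuousOn.sub
        · exact ContinuousOn.div (by fun_prop) (by fun_prop) hDne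
        · exact continuousOn_const
    · apply ContinuousOn.div (by fun_prop) (by fun_prop)
      intro r hr
      exact (Real.sqrt_pos.2 (hΔpos r ⟨hr.1, hr.2.le⟩)).ne'
  · -- the a.e. bound
    filter_upwards [ae_restrict_mem measurableSet_Ioo] with r hr
    have hr1 : rp < r := hr.1
    have hr2 : r < r₀ := hr.2
    have h0r : 0 < r := hrp.trans hr1
    have ht : 0 < r - rp := sub_pos.2 hr1
    have hgr : 0 < g r := hgpos r ⟨hr1.le, hr2.le⟩
    have hDr : (0:ℝ) < r ^ 2 + a ^ 2 := by positivity
    have hΔr : 0 < (r ^ 2 + a ^ 2) * (1 + r ^ 2 / l ^ 2) - 2 * m * r + z ^ 2 :=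
      hΔpos r ⟨hr1, hr2.le⟩
    -- key algebraic identity for the phase difference
    have hφ : (a * (1 - a ^ 2 / l ^ 2) * k + e * qe * r) / (r ^ 2 + a ^ 2) -
          (a * (1 - a ^ 2 / l ^ 2) * k + e * qe * rp) / (rp ^ 2 + a ^ 2)
        = (r - rp) * hh r / ((r ^ 2 + a ^ 2) * (rp ^ 2 + a ^ 2)) := by
      simp only [hhdef]
      field_simp
      ring
    have hA : (r ^ 2 + a ^ 2) /
          ((r ^ 2 + a ^ 2) * (1 + r ^ 2 / l ^ 2) - 2 * m * r + z ^ 2) *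
          |(a * (1 - a ^ 2 / l ^ 2) * k + e * qe * r) / (r ^ 2 + a ^ 2) -
            (a * (1 - a ^ 2 / l ^ 2) * k + e * qe * rp) / (rp ^ 2 + a ^ 2)|
        = |hh r| / (g r * (rp ^ 2 + a ^ 2)) := by
      rw [hφ, hfac r, abs_div, abs_mul, abs_of_pos ht, abs_of_pos (mul_pos hDr hDrp)]
      field_simp
    have hAle : |hh r| / (g r * (rp ^ 2 + a ^ 2)) ≤ C₁ := by
      rw [hC₁def]
      apply div_le_div₀ hMh0 _ (mul_pos hmg hDrp)
      · exact mul_le_mul_of_nonneg_right (isMinOn_iff.mp hcmin r ⟨hr1.le, hr2.le⟩) hDrp.le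
      · exact isMaxOn_iff.mp hdmax r ⟨hr1.le, hr2.le⟩
    -- second term bound
    have hsq : Real.sqrt ((r ^ 2 + a ^ 2) * (1 + r ^ 2 / l ^ 2) - 2 * m * r + z ^ 2)
        = Real.sqrt (r - rp) * Real.sqrt (g r) := by
      rw [hfac r, Real.sqrt_mul ht.le]
    have hBle : |(μ * |r| + |lam|) /
          Real.sqrt ((r ^ 2 + a ^ 2) * (1 + r ^ 2 / l ^ 2) - 2 * m * r + z ^ 2)|
        ≤ C₂ * (r - rp) ^ (-(1/2) : ℝ) := by
      rw [abs_div, abs_of_pos (Real.sqrt_pos.2 hΔr), hsq]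
      have hnum : abs (μ * |r| + |lam|) ≤ |μ| * r₀ + |lam| := by
        have h1 : abs (μ * |r| + |lam|) ≤ |μ| * |r| + |lam| := by
          calc abs (μ * |r| + |lam|) ≤ abs (μ * |r|) + |(|lam|)| := abs_add_le _ _
          _ = |μ| * |r| + |lam| := by rw [abs_mul, abs_abs, abs_abs]
        have h2 : |r| ≤ r₀ := by rw [abs_of_pos h0r]; exact hr2.le
        have h3 : |μ| * |r| ≤ |μ| * r₀ := mul_le_mul_of_nonneg_left h2 (abs_nonneg μ)
        linarith
      have hmgle : Real.sqrt mg ≤ Real.sqrt (g r) :=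
        Real.sqrt_le_sqrt (isMinOn_iff.mp hcmin r ⟨hr1.le, hr2.le⟩)
      have hs1 : 0 < Real.sqrt (r - rp) := Real.sqrt_pos.2 ht
      have hs2 : 0 < Real.sqrt mg := Real.sqrt_pos.2 hmg
      have key : abs (μ * |r| + |lam|) / (Real.sqrt (r - rp) * Real.sqrt (g r))
          ≤ (|μ| * r₀ + |lam|) / (Real.sqrt (r - rp) * Real.sqrt mg) := by
        apply div_le_div₀ _ hnum (mul_pos hs1 hs2)
          (mul_le_mul_of_nonneg_left hmgle hs1.le)
        have : (0:ℝ) < r₀ := hrp.trans hr₀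
        positivity
      refine key.trans (le_of_eq ?_)
      rw [Real.rpow_neg ht.le, ← Real.sqrt_eq_rpow, hC₂def,
        div_mul_eq_div_div_swap, div_eq_mul_inv]
    -- put it together
    have hGr : 0 ≤ G r := by
      simp only [hGdef]
      have : (0:ℝ) ≤ (r - rp) ^ (-(1/2) : ℝ) := Real.rpow_nonneg ht.le _
      have hC₁0 : 0 ≤ C₁ := div_nonneg hMh0 (mul_pos hmg hDrp).le
      positivity
    rw [Real.norm_eq_abs, Real.norm_eq_abs, abs_of_nonneg hGr]
    refine (abs_add_le _ _).trans ?_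
    rw [abs_of_nonneg (mul_nonneg (div_nonneg hDr.le hΔr.le) (abs_nonneg _)), hA]
    exact add_le_add hAle hBle
end

section
/- Let H be a nonzero complex Hilbert space and let G be a bounded selfadjoint operator on H. For t ∈ ℝ let U_t = exp(i t G), the operator exponential of i t G. Then there exist a real number T ≠ 0 and a vector ψ ≠ 0 such that U_{t+T} ψ = U_t ψ for all t ∈ ℝ if and only if G has an eigenvalue (i.e., the point spectrum of G is nonempty). -/
open Complex

/- Statement 17: for a bounded selfadjoint operator `G` on a nonzero complex Hilbert
space, the unitary group `U_t = exp(itG)` has a nonzero time-periodic orbit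
(`U_{t+T} ψ = U_t ψ` for all `t`, with `T ≠ 0`, `ψ ≠ 0`) iff `G` has an eigenvalue. -/

noncomputable def phiAux (w : ℂ) : ℂ := if w = 0 then 1 else (Complex.exp w - 1) / w

lemma phiAux_zero : phiAux 0 = 1 := by simp [phiAux]

lemma mul_phiAux (w : ℂ) : w * phiAux w = Complex.exp w - 1 := by
  by_cases h : w = 0
  · simp [phiAux, h]
  · simp only [phiAux, if_neg h]; field_simp

lemma continuous_phiAux : Continuous phiAux := by
  rw [continuous_iff_continuousAt]
  intro w
  by_cases h : w = 0
  · subst h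
    have h1 : HasDerivAt Complex.exp 1 0 := by
      simpa using Complex.hasDerivAt_exp 0
    rw [hasDerivAt_iff_tendsto_slope] at h1
    have h2 : Filter.Tendsto phiAux (nhdsWithin 0 {(0:ℂ)}ᶜ) (nhds 1) := by
      refine h1.congr' ?_
      filter_upwards [self_mem_nhdsWithin] with z hz
      simp only [Set.mem_compl_iff, Set.mem_singleton_iff] at hz
      simp [slope_def_field, phiAux, if_neg hz, Complex.exp_zero]
    rw [ContinuousAt, ← nhdsNE_sup_pure 0, Filter.tendsto_sup]
    constructor
    · simpa [phiAux_zero] using h2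
    · exact tendsto_pure_nhds phiAux 0
  · have h2 : ContinuousAt (fun z => (Complex.exp z - 1) / z) w :=
      ContinuousAt.div (by fun_prop) continuousAt_id h
    apply h2.congr
    filter_upwards [isOpen_compl_singleton.mem_nhds (by simpa using h)] with z hz
    simp only [Set.mem_compl_iff, Set.mem_singleton_iff] at hz
    simp [phiAux, if_neg hz]

lemma phiAux_ne_zero {w : ℂ} (h : Complex.exp w = 1 → w = 0) : phiAux w ≠ 0 := by
  by_cases hw : w = 0
  · simp [hw, phiAux_zero]
  · simp only [phiAux, if_neg hw]
    refine div_ne_zero (fun hc => hw (h ?_)) hw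
    rwa [sub_eq_zero] at hc

noncomputable def gAux (c : ℂ) (S : Finset ℂ) (z : ℂ) : ℂ :=
  if z ∈ S then c / ∏ μ ∈ S.erase z, (z - μ)
  else (Complex.exp (c * z) - 1) / ∏ μ ∈ S, (z - μ)

lemma prod_sub_ne_zero {S : Finset ℂ} {z : ℂ} (hz : z ∉ S) : (∏ μ ∈ S, (z - μ)) ≠ 0 := by
  rw [Finset.prod_ne_zero_iff]
  intro μ hμ
  exact sub_ne_zero.mpr fun h => hz (by rw [h]; exact hμ)

lemma continuous_prod_sub (S : Finset ℂ) : Continuous fun w : ℂ => ∏ μ ∈ S, (w - μ) :=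
  continuous_finset_prod S (fun μ _ => by fun_prop)

lemma gAux_eq_near (c : ℂ) (S : Finset ℂ) (hS : ∀ μ ∈ S, Complex.exp (c * μ) = 1)
    {l : ℂ} (hl : l ∈ S) {z : ℂ} (hz : z ∉ S.erase l) :
    gAux c S z = c * phiAux (c * (z - l)) / ∏ μ ∈ S.erase l, (z - μ) := by
  by_cases hzS : z ∈ S
  · have hzl : z = l := by
      by_contra hne
      exact hz (Finset.mem_erase.mpr ⟨hne, hzS⟩)
    subst hzl
    simp [gAux, hzS, phiAux_zero]
  · have hzl : z ≠ l := fun h => hzS (h ▸ hl)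
    have hprod : ∏ μ ∈ S, (z - μ) = (z - l) * ∏ μ ∈ S.erase l, (z - μ) :=
      (Finset.mul_prod_erase S _ hl).symm
    have hexp : Complex.exp (c * (z - l)) = Complex.exp (c * z) := by
      rw [mul_sub, Complex.exp_sub, hS l hl, div_one]
    have key : (z - l) * (c * phiAux (c * (z - l))) = Complex.exp (c * z) - 1 := by
      have h2 := mul_phiAux (c * (z - l))
      calc (z - l) * (c * phiAux (c * (z - l))) = (c * (z - l)) * phiAux (c * (z - l)) := by ring
        _ = Complex.exp (c * (z - l)) - 1 := h2
        _ = Complex.exp (c * z) - 1 := by rw [hexp]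
    rw [gAux, if_neg hzS, hprod, ← key, mul_div_mul_left _ _ (sub_ne_zero.mpr hzl)]

lemma continuous_gAux (c : ℂ) (S : Finset ℂ) (hS : ∀ μ ∈ S, Complex.exp (c * μ) = 1) :
    Continuous (gAux c S) := by
  rw [continuous_iff_continuousAt]
  intro z
  by_cases hz : z ∈ S
  · have hden : (∏ μ ∈ S.erase z, (z - μ)) ≠ 0 :=
      prod_sub_ne_zero (Finset.notMem_erase z S)
    have hcont : ContinuousAt (fun w => c * phiAux (c * (w - z)) / ∏ μ ∈ S.erase z, (w - μ)) z := by
      apply ContinuousAt.div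
      · exact (continuous_const.mul (continuous_phiAux.comp (by fun_prop))).continuousAt
      · exact (continuous_prod_sub _).continuousAt
      · exact hden
    apply hcont.congr
    have hopen : IsOpen ((↑(S.erase z) : Set ℂ))ᶜ :=
      (Set.Finite.isClosed (Finset.finite_toSet _)).isOpen_compl
    filter_upwards [hopen.mem_nhds (by simp)] with w hw
    have hw' : w ∉ S.erase z := fun hc => hw (Finset.mem_coe.mpr hc)
    exact (gAux_eq_near c S hS hz hw').symm
  · have hden : (∏ μ ∈ S, (z - μ)) ≠ 0 := prod_sub_ne_zero hz
    have hcont : ContinuousAt (fun w => (Complex.exp (c * w) - 1) / ∏ μ ∈ S, (w - μ)) z := by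
      apply ContinuousAt.div
      · fun_prop
      · exact (continuous_prod_sub _).continuousAt
      · exact hden
    apply hcont.congr
    have hopen : IsOpen ((↑S : Set ℂ))ᶜ :=
      (Set.Finite.isClosed (Finset.finite_toSet _)).isOpen_compl
    filter_upwards [hopen.mem_nhds (by simpa using hz)] with w hw
    have hwS : w ∉ S := fun hc => hw (Finset.mem_coe.mpr hc)
    simp [gAux, if_neg hwS]

lemma prod_mul_gAux (c : ℂ) (S : Finset ℂ) (hS : ∀ μ ∈ S, Complex.exp (c * μ) = 1) (z : ℂ) :
    (∏ μ ∈ S, (z - μ)) * gAux c S z = Complex.exp (c * z) - 1 := by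
  by_cases hz : z ∈ S
  · have h0 : (∏ μ ∈ S, (z - μ)) = 0 := Finset.prod_eq_zero hz (by simp)
    rw [h0, zero_mul, hS z hz, sub_self]
  · rw [gAux, if_neg hz, mul_div_cancel₀ _ (prod_sub_ne_zero hz)]

lemma gAux_ne_zero (c : ℂ) (hc : c ≠ 0) (S : Finset ℂ) {z : ℂ}
    (hz : Complex.exp (c * z) = 1 → z ∈ S) : gAux c S z ≠ 0 := by
  by_cases hzS : z ∈ S
  · rw [gAux, if_pos hzS]
    exact div_ne_zero hc (prod_sub_ne_zero (Finset.notMem_erase z S))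
  · rw [gAux, if_neg hzS]
    refine div_ne_zero (fun h => hzS (hz ?_)) (prod_sub_ne_zero hzS)
    rwa [sub_eq_zero] at h

section ops
variable {H : Type*} [NormedAddCommGroup H] [InnerProductSpace ℂ H] [CompleteSpace H]

lemma exp_apply_eigen (A : H →L[ℂ] H) (a : ℂ) (ψ : H) (hψ : A ψ = a • ψ) :
    NormedSpace.exp A ψ = Complex.exp a • ψ := by
  have hpow : ∀ n : ℕ, (A ^ n) ψ = a ^ n • ψ := by
    intro n
    induction n with
    | zero => simp
    | succ n ih =>
        rw [pow_succ', ContinuousLinearMap.mul_apply, ih, map_smul, hψ, smul_smul, mul_comm (a^n) a, ← pow_succ']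
  rw [NormedSpace.exp_eq_tsum ℂ]
  have hs := NormedSpace.expSeries_summable' (𝕂 := ℂ) A
  have heval := (ContinuousLinearMap.apply ℂ H ψ).map_tsum hs
  simp only [ContinuousLinearMap.apply_apply] at heval
  rw [heval]
  simp only [ContinuousLinearMap.smul_apply, hpow, smul_smul]
  have hs2 : Summable fun n : ℕ => ((n.factorial : ℂ))⁻¹ * a ^ n := by
    simpa [smul_eq_mul] using NormedSpace.expSeries_summable' (𝕂 := ℂ) a
  rw [hs2.tsum_smul_const]
  congr 1
  rw [Complex.exp_eq_exp_ℂ, NormedSpace.exp_eq_tsum ℂ]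
  simp [smul_eq_mul]

lemma prod_ker (G : H →L[ℂ] H) (hG : IsStarNormal G) (S : Finset ℂ) :
    ∀ ψ : H, ψ ≠ 0 → cfc (fun z : ℂ => ∏ μ ∈ S, (z - μ)) G ψ = 0 →
      ∃ c : ℂ, ∃ φ : H, φ ≠ 0 ∧ G φ = c • φ := by
  induction S using Finset.induction_on with
  | empty =>
      intro ψ hψ h
      exfalso
      apply hψ
      have h1 : cfc (fun z : ℂ => ∏ μ ∈ (∅ : Finset ℂ), (z - μ)) G = 1 := by
        simp only [Finset.prod_empty]
        rw [cfc_const 1 G hG, map_one]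
      rw [h1, ContinuousLinearMap.one_apply] at h
      exact h
  | @insert a S ha ih =>
      intro ψ hψ h
      have funeq : (fun z : ℂ => ∏ μ ∈ insert a S, (z - μ))
          = fun z : ℂ => (z - a) * ∏ μ ∈ S, (z - μ) := by
        funext z
        rw [Finset.prod_insert ha]
      have hsplit : cfc (fun z : ℂ => ∏ μ ∈ insert a S, (z - μ)) G
          = cfc (fun z : ℂ => z - a) G * cfc (fun z : ℂ => ∏ μ ∈ S, (z - μ)) G := by
        rw [funeq, cfc_mul _ _ G (by fun_prop) (continuous_prod_sub S).continuousOn]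
      by_cases hB : cfc (fun z : ℂ => ∏ μ ∈ S, (z - μ)) G ψ = 0
      · exact ih ψ hψ hB
      · refine ⟨a, cfc (fun z : ℂ => ∏ μ ∈ S, (z - μ)) G ψ, hB, ?_⟩
        rw [hsplit, ContinuousLinearMap.mul_apply] at h
        have h3 : cfc (fun z : ℂ => z - a) G = G - algebraMap ℂ (H →L[ℂ] H) a := by
          rw [cfc_sub (fun z : ℂ => z) (fun _ : ℂ => a) G (by fun_prop) (by fun_prop),
            cfc_id' ℂ G, cfc_const a G]
        rw [h3, ContinuousLinearMap.sub_apply, Algebra.algebraMap_eq_smul_one,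
          ContinuousLinearMap.smul_apply, ContinuousLinearMap.one_apply, sub_eq_zero] at h
        exact h

end ops


theorem stmt17 {H : Type*} [NormedAddCommGroup H] [InnerProductSpace ℂ H]
    [CompleteSpace H] [Nontrivial H] (G : H →L[ℂ] H) (hG : IsSelfAdjoint G) :
    (∃ T : ℝ, T ≠ 0 ∧ ∃ ψ : H, ψ ≠ 0 ∧ ∀ t : ℝ,
        NormedSpace.exp ((I * ((t + T : ℝ) : ℂ)) • G) ψ =
          NormedSpace.exp ((I * ((t : ℝ) : ℂ)) • G) ψ) ↔
      ∃ c : ℂ, ∃ ψ : H, ψ ≠ 0 ∧ G ψ = c • ψ := by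
  constructor
  · rintro ⟨T, hT, ψ, hψ, hper⟩
    haveI : IsStarNormal G := hG.isStarNormal
    set c : ℂ := I * (T : ℂ) with hc
    have hT' : (T : ℂ) ≠ 0 := by exact_mod_cast hT
    have hc0 : c ≠ 0 := mul_ne_zero I_ne_zero hT'
    have hA : NormedSpace.exp (c • G) ψ = ψ := by
      have h0 := hper 0
      rw [show ((0 : ℝ) + T : ℝ) = T from zero_add T] at h0
      rw [show ((I * ((0 : ℝ) : ℂ)) • G) = 0 by simp] at h0
      rw [NormedSpace.exp_zero, ContinuousLinearMap.one_apply] at h0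
      exact h0
    -- finiteness of the relevant zero set
    have hfin : Set.Finite {z | z ∈ spectrum ℂ G ∧ Complex.exp (c * z) = 1} := by
      set M : ℤ := ⌈‖G‖ * |T| / (2 * Real.pi)⌉ with hM
      apply Set.Finite.subset
        ((Set.finite_Icc (-M) M).image (fun n : ℤ => ((n : ℂ) * (2 * (Real.pi : ℂ)) / (T : ℂ))))
      rintro z ⟨hzspec, hz1⟩
      obtain ⟨n, hn⟩ := Complex.exp_eq_one_iff.mp hz1
      rw [hc] at hn
      have hzval : z = (n : ℂ) * (2 * (Real.pi : ℂ)) / (T : ℂ) := by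
        rw [eq_div_iff hT']
        linear_combination (-I) * hn + (z * (T : ℂ) - (n : ℂ) * (2 * Real.pi)) * Complex.I_mul_I
      have hnorm : ‖z‖ ≤ ‖G‖ := spectrum.norm_le_norm_of_mem hzspec
      have hzn : ‖z‖ = |(n : ℝ)| * (2 * Real.pi) / |T| := by
        rw [hzval, norm_div, norm_mul]
        rw [show ((2 : ℂ) * (Real.pi : ℂ)) = ((2 * Real.pi : ℝ) : ℂ) by push_cast; ring]
        rw [Complex.norm_real, Complex.norm_intCast, Complex.norm_real]
        rw [Real.norm_eq_abs, Real.norm_eq_abs, abs_of_pos (by positivity : (0:ℝ) < 2 * Real.pi)]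
      have hpi : (0 : ℝ) < 2 * Real.pi := by positivity
      have hTabs : (0 : ℝ) < |T| := abs_pos.mpr hT
      have hnle : |(n : ℝ)| ≤ ‖G‖ * |T| / (2 * Real.pi) := by
        rw [hzn, div_le_iff₀ hTabs] at hnorm
        rw [le_div_iff₀ hpi]
        nlinarith [hnorm, hTabs]
      have hnM : |(n : ℝ)| ≤ (M : ℝ) := hnle.trans (Int.le_ceil _)
      have : |n| ≤ M := by
        have h7 : ((|n| : ℤ) : ℝ) ≤ (M : ℝ) := by rw [Int.cast_abs]; exact hnM
        exact_mod_cast h7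
      exact ⟨n, Set.mem_Icc.mpr (abs_le.mp this), hzval.symm⟩
    set S : Finset ℂ := hfin.toFinset with hSdef
    have hS1 : ∀ μ ∈ S, Complex.exp (c * μ) = 1 := fun μ h => (hfin.mem_toFinset.mp h).2
    have hS2 : ∀ z ∈ spectrum ℂ G, Complex.exp (c * z) = 1 → z ∈ S :=
      fun z hz h1 => hfin.mem_toFinset.mpr ⟨hz, h1⟩
    haveI hnorm : IsStarNormal (c • G) := by
      constructor
      rw [star_smul, hG.star_eq]
      exact ((Commute.refl G).smul_left (starRingEnd ℂ c)).smul_right c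
    have e1 : cfc (fun z : ℂ => Complex.exp (c * z)) G = NormedSpace.exp (c • G) := by
      rw [cfc_comp_const_mul c Complex.exp G (Complex.continuous_exp.continuousOn) ‹_›,
        CFC.complex_exp_eq_normedSpace_exp]
    have hgcont : ContinuousOn (gAux c S) (spectrum ℂ G) := (continuous_gAux c S hS1).continuousOn
    have hpcont : ContinuousOn (fun z : ℂ => ∏ μ ∈ S, (z - μ)) (spectrum ℂ G) :=
      (continuous_prod_sub S).continuousOn
    have e2 : NormedSpace.exp (c • G) - 1 =
        cfc (fun z : ℂ => ∏ μ ∈ S, (z - μ)) G * cfc (gAux c S) G := by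
      rw [← cfc_mul _ _ G hpcont hgcont]
      have funeq : (fun z : ℂ => (∏ μ ∈ S, (z - μ)) * gAux c S z)
          = fun z : ℂ => Complex.exp (c * z) - 1 := funext (prod_mul_gAux c S hS1)
      rw [funeq, cfc_sub (fun z : ℂ => Complex.exp (c * z)) (fun _ : ℂ => 1) G
        (Complex.continuous_exp.comp (continuous_const.mul continuous_id)).continuousOn
        continuousOn_const, e1, cfc_const 1 G ‹_›, map_one]
    have hU : IsUnit (cfc (gAux c S) G) :=
      (isUnit_cfc_iff _ G hgcont).mpr (fun x hx => gAux_ne_zero c hc0 S (hS2 x hx))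
    have hker : cfc (fun z : ℂ => ∏ μ ∈ S, (z - μ)) G ψ = 0 := by
      have h4 : (NormedSpace.exp (c • G) - 1) ψ = 0 := by
        rw [ContinuousLinearMap.sub_apply, hA, ContinuousLinearMap.one_apply, sub_self]
      rw [e2] at h4
      have hcomm : cfc (fun z : ℂ => ∏ μ ∈ S, (z - μ)) G * cfc (gAux c S) G
          = cfc (gAux c S) G * cfc (fun z : ℂ => ∏ μ ∈ S, (z - μ)) G := by
        rw [← cfc_mul _ _ G hpcont hgcont, ← cfc_mul _ _ G hgcont hpcont]
        congr 1
        funext z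
        ring
      rw [hcomm, ContinuousLinearMap.mul_apply] at h4
      obtain ⟨u, hu⟩ := hU
      rw [← hu] at h4
      have h6 : (↑u⁻¹ : H →L[ℂ] H) ((↑u : H →L[ℂ] H)
          (cfc (fun z : ℂ => ∏ μ ∈ S, (z - μ)) G ψ)) = 0 := by
        rw [h4, map_zero]
      rwa [← ContinuousLinearMap.mul_apply, u.inv_mul, ContinuousLinearMap.one_apply] at h6
    exact prod_ker G ‹_› S ψ hψ hker
  · rintro ⟨cc, ψ, hψ, hGψ⟩
    have hsym : (G : H →ₗ[ℂ] H).IsSymmetric := hG.isSymmetric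
    have hcc : (starRingEnd ℂ) cc = cc := by
      have h1 : (inner ℂ (G ψ) ψ : ℂ) = inner ℂ ψ (G ψ) := hsym ψ ψ
      rw [hGψ, inner_smul_left, inner_smul_right] at h1
      have h2 : (inner ℂ ψ ψ : ℂ) ≠ 0 := inner_self_ne_zero.mpr hψ
      exact mul_right_cancel₀ h2 h1
    obtain ⟨r, hr⟩ : ∃ r : ℝ, cc = (r : ℂ) := ⟨cc.re, (Complex.conj_eq_iff_re.mp hcc).symm ▸ rfl⟩
    subst hr
    have key : ∀ (s : ℝ), NormedSpace.exp ((I * (s : ℂ)) • G) ψ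
        = Complex.exp (I * s * r) • ψ := by
      intro s
      apply exp_apply_eigen
      rw [ContinuousLinearMap.smul_apply, hGψ, smul_smul]
    by_cases hr0 : r = 0
    · refine ⟨1, one_ne_zero, ψ, hψ, fun t => ?_⟩
      rw [key, key]
      subst hr0
      simp
    · refine ⟨2 * Real.pi / r, div_ne_zero (by positivity) hr0, ψ, hψ, fun t => ?_⟩
      rw [key, key]
      congr 1
      rw [show ((t + 2 * Real.pi / r : ℝ) : ℂ) = (t : ℂ) + ((2 * Real.pi / r : ℝ) : ℂ) by push_cast; ring]
      rw [mul_add, add_mul, Complex.exp_add]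
      have : I * ((2 * Real.pi / r : ℝ) : ℂ) * r = 2 * Real.pi * I := by
        have hrC : (r : ℂ) ≠ 0 := by exact_mod_cast hr0
        push_cast
        field_simp
      rw [this, Complex.exp_two_pi_mul_I, mul_one]
end
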